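/- For all integers d ≥ 2 and n ≥ 2 and every ε > 0, there exist matrices X, Y ∈ ℝ^{d×n}, each with no zero row and no zero column, such that C_P(X)/C_D(X) < 1/d + ε and C_P(Y)/C_D(Y) > n − ε. In other words, the bounds 1/d ≤ C_P/C_D ≤ n are tight. -/

import Mathlib

/-- `C_P(X) = Σ_i ‖X_{i:}‖₀ · ‖X_{i:}‖²`. -/
noncomputable def CPmat {d n : ℕ} (X : Matrix (Fin d) (Fin n) ℝ) : ℝ :=
  ∑ i, ((Finset.univ.filter fun j => X i j ≠ 0).card : ℝ) * ∑ j, (X i j) ^ 2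

/-- `C_D(X) = Σ_j ‖X_{:j}‖₀ · ‖X_{:j}‖²`. -/
noncomputable def CDmat {d n : ℕ} (X : Matrix (Fin d) (Fin n) ℝ) : ℝ :=
  ∑ j, ((Finset.univ.filter fun i => X i j ≠ 0).card : ℝ) * ∑ i, (X i j) ^ 2

open Matrix

lemma CP_transpose {d n : ℕ} (X : Matrix (Fin d) (Fin n) ℝ) :
    CPmat Xᵀ = CDmat X := by
  rfl

lemma CD_transpose {d n : ℕ} (X : Matrix (Fin d) (Fin n) ℝ) :
    CDmat Xᵀ = CPmat X := by
  rfl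

lemma sum_if_eq {D : ℕ} [NeZero D] (A B : ℝ) :
    ∑ i : Fin D, (if i = 0 then A else B) = A + ((D:ℝ)-1)*B := by
  calc ∑ i : Fin D, (if i = 0 then A else B)
      = ∑ i : Fin D, ((if i = 0 then A - B else 0) + B) := by
        apply Finset.sum_congr rfl; intro i _; split <;> ring
    _ = (A - B) + (D:ℝ)*B := by
        rw [Finset.sum_add_distrib, Finset.sum_ite_eq' Finset.univ (0 : Fin D)]
        simp [mul_comm]
    _ = A + ((D:ℝ)-1)*B := by ring

def Xmat (D N : ℕ) (a : ℝ) : Matrix (Fin D) (Fin N) ℝ :=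
  fun i j => if i.val = 0 then a else if j.val = 0 then 1 else 0

lemma comp {D N : ℕ} (hD : 2 ≤ D) (hN : 2 ≤ N) (a : ℝ) (ha : a ≠ 0) :
    CPmat (Xmat D N a) = (N:ℝ)^2 * a^2 + ((D:ℝ)-1) ∧
    CDmat (Xmat D N a) = ((D:ℝ)+(N:ℝ)-1) * a^2 + (D:ℝ)*((D:ℝ)-1) := by
  haveI : NeZero D := ⟨by omega⟩
  haveI : NeZero N := ⟨by omega⟩
  have hrow : ∀ i : Fin D, ((Finset.univ.filter fun j : Fin N => Xmat D N a i j ≠ 0).card : ℝ) * ∑ j, (Xmat D N a i j) ^ 2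
      = if i = 0 then (N:ℝ) * ((N:ℝ)*a^2) else 1 := by
    intro i
    by_cases hi : i = 0
    · subst hi
      have h1 : (Finset.univ.filter fun j : Fin N => Xmat D N a 0 j ≠ 0) = Finset.univ := by
        ext j; simp [Xmat, ha]
      have h2 : ∑ j, (Xmat D N a 0 j)^2 = (N:ℝ)*a^2 := by
        simp [Xmat, mul_comm]
      rw [if_pos rfl, h1, h2, Finset.card_univ, Fintype.card_fin]
    · have hi' : (i : ℕ) ≠ 0 := by
        simpa [Fin.val_eq_zero_iff] using hi
      have h1 : (Finset.univ.filter fun j : Fin N => Xmat D N a i j ≠ 0) = {(0 : Fin N)} := by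
        ext j; simp [Xmat, hi', Fin.val_eq_zero_iff]
      have h2 : ∑ j, (Xmat D N a i j)^2 = 1 := by
        have : ∀ j : Fin N, (Xmat D N a i j)^2 = if j = 0 then 1 else 0 := by
          intro j
          by_cases hj : (j:ℕ) = 0
          · simp [Xmat, hi', hj, Fin.ext_iff]
          · simp [Xmat, hi', hj, Fin.ext_iff]
        rw [Finset.sum_congr rfl (fun j _ => this j), Finset.sum_ite_eq' Finset.univ (0 : Fin N)]
        simp
      rw [if_neg hi, h1, h2]; simp
  have hcol : ∀ j : Fin N, ((Finset.univ.filter fun i : Fin D => Xmat D N a i j ≠ 0).card : ℝ) * ∑ i, (Xmat D N a i j) ^ 2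
      = if j = 0 then (D:ℝ) * (a^2 + ((D:ℝ)-1)) else a^2 := by
    intro j
    by_cases hj : j = 0
    · subst hj
      have h1 : (Finset.univ.filter fun i : Fin D => Xmat D N a i 0 ≠ 0) = Finset.univ := by
        ext i; by_cases hi : (i : ℕ) = 0 <;> simp [Xmat, ha, Fin.val_eq_zero_iff.mp, hi, apply_ite (· = (0:ℝ))]
      have h2 : ∑ i, (Xmat D N a i 0)^2 = a^2 + ((D:ℝ)-1)*1 := by
        have : ∀ i : Fin D, (Xmat D N a i 0)^2 = if i = 0 then a^2 else 1 := by
          intro i; by_cases hi : (i:ℕ) = 0 <;> simp [Xmat, hi, Fin.ext_iff]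
        rw [Finset.sum_congr rfl (fun i _ => this i), sum_if_eq]
      rw [if_pos rfl, h1, h2, Finset.card_univ, Fintype.card_fin]; ring
    · have hj' : (j : ℕ) ≠ 0 := by simpa [Fin.val_eq_zero_iff] using hj
      have h1 : (Finset.univ.filter fun i : Fin D => Xmat D N a i j ≠ 0) = {(0 : Fin D)} := by
        ext i; simp [Xmat, hj', ha, Fin.val_eq_zero_iff]
      have h2 : ∑ i, (Xmat D N a i j)^2 = a^2 := by
        have : ∀ i : Fin D, (Xmat D N a i j)^2 = if i = 0 then a^2 else 0 := by
          intro i; by_cases hi : (i:ℕ) = 0 <;> simp [Xmat, hi, hj', Fin.ext_iff]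
        rw [Finset.sum_congr rfl (fun i _ => this i), Finset.sum_ite_eq' Finset.univ (0 : Fin D)]
        simp
      rw [if_neg hj, h1, h2]; simp
  constructor
  · rw [CPmat, Finset.sum_congr rfl (fun i _ => hrow i), sum_if_eq]
    ring
  · rw [CDmat, Finset.sum_congr rfl (fun j _ => hcol j), sum_if_eq]
    ring

lemma Xmat_rows {D N : ℕ} (hD : 2 ≤ D) (hN : 2 ≤ N) (a : ℝ) (ha : a ≠ 0) :
    (∀ i, ∃ j, Xmat D N a i j ≠ 0) ∧ (∀ j, ∃ i, Xmat D N a i j ≠ 0) := by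
  haveI : NeZero D := ⟨by omega⟩
  haveI : NeZero N := ⟨by omega⟩
  constructor
  · intro i
    refine ⟨0, ?_⟩
    by_cases hi : (i:ℕ) = 0 <;> simp [Xmat, hi, ha]
  · intro j
    refine ⟨0, ?_⟩
    simp [Xmat, ha]

set_option maxHeartbeats 1000000 in
/-- **Tightness of the bounds `1/d ≤ C_P/C_D ≤ n` (Theorem 5.3).**
For all `d, n ≥ 2` and `ε > 0` there are matrices `X, Y ∈ ℝ^{d×n}` with no zero rows
or columns such that `C_P(X)/C_D(X) < 1/d + ε` and `C_P(Y)/C_D(Y) > n − ε`. -/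
theorem stmt_5 (d n : ℕ) (hd : 2 ≤ d) (hn : 2 ≤ n) (ε : ℝ) (hε : 0 < ε) :
    ∃ X Y : Matrix (Fin d) (Fin n) ℝ,
      (∀ i, ∃ j, X i j ≠ 0) ∧ (∀ j, ∃ i, X i j ≠ 0) ∧
      (∀ i, ∃ j, Y i j ≠ 0) ∧ (∀ j, ∃ i, Y i j ≠ 0) ∧
      CPmat X / CDmat X < 1 / (d : ℝ) + ε ∧ CPmat Y / CDmat Y > (n : ℝ) - ε := by
  have hd1 : (2:ℝ) ≤ (d:ℝ) := by exact_mod_cast hd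
  have hn1 : (2:ℝ) ≤ (n:ℝ) := by exact_mod_cast hn
  have hdpos : (0:ℝ) < d := by linarith
  have hnpos : (0:ℝ) < n := by linarith
  -- X part
  set s : ℝ := ε / (n:ℝ)^2 with hs_def
  have hs_pos : 0 < s := div_pos hε (by positivity)
  set a : ℝ := Real.sqrt s with ha_def
  have ha2 : a^2 = s := Real.sq_sqrt hs_pos.le
  have ha : a ≠ 0 := by positivity
  -- Y part
  set s' : ℝ := ε * ((n:ℝ)-1) / ((n:ℝ) * (d:ℝ)^2) with hs'_def
  have hs'_pos : 0 < s' := by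
    apply div_pos (by nlinarith) (by positivity)
  set b : ℝ := Real.sqrt s' with hb_def
  have hb2 : b^2 = s' := Real.sq_sqrt hs'_pos.le
  have hb : b ≠ 0 := by positivity
  have hns : (n:ℝ)^2 * s = ε := by
    rw [hs_def]; field_simp
  have hns' : (n:ℝ) * (d:ℝ)^2 * s' = ε * ((n:ℝ)-1) := by
    rw [hs'_def]; field_simp
  clear_value a b
  clear_value s s'
  obtain ⟨hCPX, hCDX⟩ := comp hd hn a ha
  obtain ⟨hCPY', hCDY'⟩ := comp hn hd b hb
  obtain ⟨hXr, hXc⟩ := Xmat_rows hd hn a ha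
  obtain ⟨hYr', hYc'⟩ := Xmat_rows hn hd b hb
  refine ⟨Xmat d n a, (Xmat n d b)ᵀ, hXr, hXc, ?_, ?_, ?_, ?_⟩
  · intro i; obtain ⟨i', h⟩ := hYc' i; exact ⟨i', h⟩
  · intro j; obtain ⟨j', h⟩ := hYr' j; exact ⟨j', h⟩
  · -- CP/CD < 1/d + ε
    rw [hCPX, hCDX, ha2]
    have hCD_pos : (0:ℝ) < ((d:ℝ)+(n:ℝ)-1) * s + (d:ℝ)*((d:ℝ)-1) :=
      add_pos (mul_pos (by linarith) hs_pos) (mul_pos hdpos (by linarith))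
    have heq : 1/(d:ℝ) + ε = (1 + ε*(d:ℝ))/(d:ℝ) := by field_simp
    rw [heq, div_lt_div_iff₀ hCD_pos hdpos]
    nlinarith [mul_pos hs_pos (show (0:ℝ) < (d:ℝ)+(n:ℝ)-1 by linarith),
      mul_pos (mul_pos hε hdpos) (show (0:ℝ) < (d:ℝ)*((d:ℝ)-1) - 1 by nlinarith),
      mul_pos (mul_pos hs_pos hε) (mul_pos hdpos (show (0:ℝ) < (d:ℝ)+(n:ℝ)-1 by linarith))]
  · -- CP(Y)/CD(Y) > n - ε
    rw [CP_transpose, CD_transpose, hCDY', hCPY', hb2]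
    have hCP_pos : (0:ℝ) < (d:ℝ)^2 * s' + ((n:ℝ)-1) :=
      add_pos (mul_pos (pow_pos hdpos 2) hs'_pos) (by linarith)
    rw [gt_iff_lt, lt_div_iff₀ hCP_pos]
    nlinarith [mul_pos hs'_pos (show (0:ℝ) < (n:ℝ)+(d:ℝ)-1 by linarith),
      mul_nonneg (mul_nonneg hε.le (sq_nonneg (d:ℝ))) hs'_pos.le, hns']
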